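/- (Convergence implies aggregation / no false consensus.) Let W, X_1, …, X_n be finitely-valued random variables and let H be a random variable that is a deterministic function of (X_1, …, X_n) (the public history of a Round Robin Protocol after t rounds). Suppose that conditionally on (W, H) the signals X_1, …, X_n are mutually independent (which holds for substitutes in any Round Robin Protocol), and suppose ε-MI consensus holds: I(X_i; W | H) ≤ ε for every i. Then the amount of information not yet aggregated satisfies I((X_1,…,X_n); W) - I(H; W) ≤ n·ε. -/

import Mathlib

open scoped BigOperators

noncomputable section

variable {Ω : Type*} [Fintype Ω]

/-- `μ` is a probability mass function on the finite sample space `Ω`. -/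
def IsPmf (μ : Ω → ℝ) : Prop := (∀ ω, 0 ≤ μ ω) ∧ ∑ ω, μ ω = 1

open Classical in
/-- Probability of the event `A` under the pmf `μ`. -/
def pr (μ : Ω → ℝ) (A : Ω → Prop) : ℝ := ∑ ω, if A ω then μ ω else 0

/-- Conditional probability of `A` given `B` (with the convention `x / 0 = 0`). -/
def cpr (μ : Ω → ℝ) (A B : Ω → Prop) : ℝ := pr μ (fun ω => A ω ∧ B ω) / pr μ B

open Classical in
/-- Mutual information between the random variables `X` and `Y`,
`I(X;Y) = Σ_{x,y} P[X=x,Y=y] log( P[X=x,Y=y] / (P[X=x]·P[Y=y]) )`. -/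
def mi (μ : Ω → ℝ) {S T : Type*} (X : Ω → S) (Y : Ω → T) : ℝ :=
  ∑ x ∈ Finset.univ.image X, ∑ y ∈ Finset.univ.image Y,
    pr μ (fun ω => X ω = x ∧ Y ω = y) *
      Real.log (pr μ (fun ω => X ω = x ∧ Y ω = y) /
        (pr μ (fun ω => X ω = x) * pr μ (fun ω => Y ω = y)))

open Classical in
/-- Mutual information between `X` and `Y` conditioned on the event `B`,
`I(X;Y|B) = Σ_{x,y} P[X=x,Y=y|B] log( P[X=x,Y=y|B] / (P[X=x|B]·P[Y=y|B]) )`. -/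
def miOn (μ : Ω → ℝ) {S T : Type*} (X : Ω → S) (Y : Ω → T) (B : Ω → Prop) : ℝ :=
  ∑ x ∈ Finset.univ.image X, ∑ y ∈ Finset.univ.image Y,
    cpr μ (fun ω => X ω = x ∧ Y ω = y) B *
      Real.log (cpr μ (fun ω => X ω = x ∧ Y ω = y) B /
        (cpr μ (fun ω => X ω = x) B * cpr μ (fun ω => Y ω = y) B))

open Classical in
/-- Conditional mutual information `I(X;Y|Z) = E_Z[ I(X;Y|Z=z) ]`. -/
def cmi (μ : Ω → ℝ) {S T U : Type*} (X : Ω → S) (Y : Ω → T) (Z : Ω → U) : ℝ :=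
  ∑ z ∈ Finset.univ.image Z,
    pr μ (fun ω => Z ω = z) * miOn μ X Y (fun ω => Z ω = z)

/-- The family `X i` is mutually independent conditioned on the event `B`. -/
def iIndepOn {n : ℕ} (μ : Ω → ℝ) {S : Type*} (X : Fin n → Ω → S) (B : Ω → Prop) : Prop :=
  ∀ x : Fin n → S,
    cpr μ (fun ω => ∀ i, X i ω = x i) B = ∏ i, cpr μ (fun ω => X i ω = x i) B

/-- The family `X i` is mutually independent conditioned on `W`
(the "substitutes" information structure when `W` is the event to be predicted). -/
def iCondIndep {n : ℕ} (μ : Ω → ℝ) {S T : Type*} (X : Fin n → Ω → S) (W : Ω → T) : Prop :=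
  ∀ w : T, pr μ (fun ω => W ω = w) ≠ 0 → iIndepOn μ X (fun ω => W ω = w)

section Helpers
open Classical Finset
variable {S T U V : Type*} {μ : Ω → ℝ}

def restr (μ : Ω → ℝ) (B : Ω → Prop) : Ω → ℝ := fun ω => if B ω then μ ω else 0

lemma pr_restrict (B A : Ω → Prop) : pr (restr μ B) A = pr μ (fun ω => A ω ∧ B ω) := by
  unfold pr restr
  refine Finset.sum_congr rfl fun ω _ => ?_
  by_cases h1 : A ω <;> by_cases h2 : B ω <;> simp [h1, h2]

lemma pr_congr {A B : Ω → Prop} (h : ∀ ω, A ω ↔ B ω) : pr μ A = pr μ B := by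
  unfold pr; exact Finset.sum_congr rfl fun ω _ => by simp only [h ω]

lemma pr_nonneg (hμ : ∀ ω, 0 ≤ μ ω) (A : Ω → Prop) : 0 ≤ pr μ A :=
  Finset.sum_nonneg fun ω _ => by split_ifs; exacts [hμ ω, le_refl 0]

lemma cpr_nonneg (hμ : ∀ ω, 0 ≤ μ ω) (A B : Ω → Prop) : 0 ≤ cpr μ A B :=
  div_nonneg (pr_nonneg hμ _) (pr_nonneg hμ _)

lemma le_pr (hμ : ∀ ω, 0 ≤ μ ω) {A : Ω → Prop} {ω : Ω} (hA : A ω) : μ ω ≤ pr μ A := by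
  unfold pr
  have := Finset.single_le_sum (f := fun ω' => if A ω' then μ ω' else 0)
    (fun i _ => by split_ifs; exacts [hμ i, le_refl 0]) (Finset.mem_univ ω)
  simpa [if_pos hA] using this

lemma pr_pos (hμ : ∀ ω, 0 ≤ μ ω) {A : Ω → Prop} {ω : Ω} (h0 : 0 < μ ω) (hA : A ω) :
    0 < pr μ A := lt_of_lt_of_le h0 (le_pr hμ hA)

lemma pr_mono (hμ : ∀ ω, 0 ≤ μ ω) {A B : Ω → Prop} (h : ∀ ω, A ω → B ω) :
    pr μ A ≤ pr μ B := by
  unfold pr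
  refine Finset.sum_le_sum fun ω _ => ?_
  by_cases hA : A ω
  · simp [hA, h ω hA]
  · simp only [if_neg hA]; split_ifs; exacts [hμ ω, le_refl 0]

-- the key "sum over values = sum over sample space" lemmas
lemma sum_ite_pair (sx : Finset S) (sy : Finset T) {a : S} {b : T}
    (ha : a ∈ sx) (hb : b ∈ sy) (c : S → T → ℝ) :
    ∑ x ∈ sx, ∑ y ∈ sy, (if a = x ∧ b = y then c x y else 0) = c a b := by
  rw [Finset.sum_eq_single_of_mem a ha]
  · simp only [true_and]
    rw [Finset.sum_eq_single_of_mem b hb] <;> simp +contextual [eq_comm]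
  · intro x _ hx
    apply Finset.sum_eq_zero
    intro y _
    rw [if_neg]; rintro ⟨rfl, _⟩; exact hx rfl

lemma omega_pair (μ : Ω → ℝ) (X : Ω → S) (Y : Ω → T) (g : S → T → ℝ) :
    ∑ x ∈ univ.image X, ∑ y ∈ univ.image Y,
      pr μ (fun ω => X ω = x ∧ Y ω = y) * g x y = ∑ ω, μ ω * g (X ω) (Y ω) := by
  unfold pr
  simp only [Finset.sum_mul, ite_mul, zero_mul]
  have h1 : ∀ x : S, (∑ y ∈ univ.image Y, ∑ ω, if X ω = x ∧ Y ω = y then μ ω * g x y else 0)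
      = ∑ ω, ∑ y ∈ univ.image Y, if X ω = x ∧ Y ω = y then μ ω * g x y else 0 :=
    fun x => Finset.sum_comm
  simp only [h1]
  rw [Finset.sum_comm]
  refine Finset.sum_congr rfl fun ω _ => ?_
  exact sum_ite_pair _ _ (mem_image_of_mem X (mem_univ ω)) (mem_image_of_mem Y (mem_univ ω)) _

lemma omega_single (μ : Ω → ℝ) (Z : Ω → V) (g : V → ℝ) :
    ∑ v ∈ univ.image Z, pr μ (fun ω => Z ω = v) * g v = ∑ ω, μ ω * g (Z ω) := by
  unfold pr
  simp only [Finset.sum_mul, ite_mul, zero_mul]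
  rw [Finset.sum_comm]
  refine Finset.sum_congr rfl fun ω _ => ?_
  rw [Finset.sum_eq_single_of_mem (Z ω) (mem_image_of_mem Z (mem_univ ω))]
  · simp
  · intro v _ hv; rw [if_neg (fun h => hv h.symm)]

lemma sum_pr_eq (Z : Ω → V) : ∑ v ∈ univ.image Z, pr μ (fun ω => Z ω = v) = ∑ ω, μ ω := by
  have := omega_single μ Z (fun _ => 1)
  simpa using this

lemma sum_restr {B : Ω → Prop} : ∑ ω, restr μ B ω = pr μ B := rfl

end Helpers

section Conversions
open Classical Finset
variable {S T U V : Type*} {μ : Ω → ℝ}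

lemma pr_zero_out (hμ : ∀ ω, 0 ≤ μ ω) {A : Ω → Prop} (h : pr μ A = 0) {ω : Ω} (hA : A ω) :
    μ ω = 0 := le_antisymm (h ▸ le_pr hμ hA) (hμ ω)

lemma mi_eq (μ : Ω → ℝ) (X : Ω → S) (Y : Ω → T) :
    mi μ X Y = ∑ ω, μ ω *
      Real.log (pr μ (fun ω' => X ω' = X ω ∧ Y ω' = Y ω) /
        (pr μ (fun ω' => X ω' = X ω) * pr μ (fun ω' => Y ω' = Y ω))) := by
  unfold mi
  exact omega_pair μ X Y (fun x y => Real.log (pr μ (fun ω' => X ω' = x ∧ Y ω' = y) /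
        (pr μ (fun ω' => X ω' = x) * pr μ (fun ω' => Y ω' = y))))

lemma miOn_eq (μ : Ω → ℝ) (X : Ω → S) (Y : Ω → T) (B : Ω → Prop) :
    miOn μ X Y B = (∑ ω, restr μ B ω *
      Real.log (cpr μ (fun ω' => X ω' = X ω ∧ Y ω' = Y ω) B /
        (cpr μ (fun ω' => X ω' = X ω) B * cpr μ (fun ω' => Y ω' = Y ω) B))) / pr μ B := by
  rw [← omega_pair (restr μ B) X Y (fun x y =>
    Real.log (cpr μ (fun ω' => X ω' = x ∧ Y ω' = y) B /
      (cpr μ (fun ω' => X ω' = x) B * cpr μ (fun ω' => Y ω' = y) B)))]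
  unfold miOn
  rw [Finset.sum_div]
  refine Finset.sum_congr rfl fun x _ => ?_
  rw [Finset.sum_div]
  refine Finset.sum_congr rfl fun y _ => ?_
  rw [pr_restrict]
  show cpr μ _ B * _ = _
  unfold cpr
  ring

lemma cmi_eq (hμ : ∀ ω, 0 ≤ μ ω) (X : Ω → S) (Y : Ω → T) (Z : Ω → U) :
    cmi μ X Y Z = ∑ ω, μ ω *
      Real.log (cpr μ (fun ω' => X ω' = X ω ∧ Y ω' = Y ω) (fun ω' => Z ω' = Z ω) /
        (cpr μ (fun ω' => X ω' = X ω) (fun ω' => Z ω' = Z ω) *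
         cpr μ (fun ω' => Y ω' = Y ω) (fun ω' => Z ω' = Z ω))) := by
  unfold cmi
  have key : ∀ z ∈ univ.image Z,
      pr μ (fun ω => Z ω = z) * miOn μ X Y (fun ω => Z ω = z)
      = ∑ ω, (if Z ω = z then μ ω *
          Real.log (cpr μ (fun ω' => X ω' = X ω ∧ Y ω' = Y ω) (fun ω' => Z ω' = Z ω) /
            (cpr μ (fun ω' => X ω' = X ω) (fun ω' => Z ω' = Z ω) *
             cpr μ (fun ω' => Y ω' = Y ω) (fun ω' => Z ω' = Z ω))) else 0) := by
    intro z _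
    rw [miOn_eq]
    by_cases hz : pr μ (fun ω => Z ω = z) = 0
    · rw [hz, div_zero, mul_zero]
      symm
      refine Finset.sum_eq_zero fun ω _ => ?_
      by_cases hω : Z ω = z
      · rw [if_pos hω, pr_zero_out hμ hz hω, zero_mul]
      · rw [if_neg hω]
    · rw [mul_comm, div_mul_cancel₀ _ hz]
      refine Finset.sum_congr rfl fun ω _ => ?_
      unfold restr
      by_cases hω : Z ω = z
      · rw [if_pos hω, if_pos hω, hω]
      · rw [if_neg hω, if_neg hω, zero_mul]
  rw [Finset.sum_congr rfl key, Finset.sum_comm]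
  refine Finset.sum_congr rfl fun ω _ => ?_
  rw [Finset.sum_ite_eq (univ.image Z) (Z ω), if_pos (mem_image_of_mem Z (mem_univ ω))]

end Conversions

section Main
open Classical Finset
variable {n : ℕ} {S T U : Type*} {μ : Ω → ℝ}

lemma log_alg {a b c d e : ℝ} (ha : 0 < a) (hb : 0 < b) (hc : 0 < c) (hd : 0 < d)
    (he : 0 < e) :
    Real.log (a / (b * c)) - Real.log (d / (e * c)) =
      Real.log ((a / e) / ((b / e) * (d / e))) := by
  rw [← Real.log_div (by positivity) (by positivity)]
  congr 1
  field_simp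

lemma step2_lemma (hμ : IsPmf μ) (W : Ω → T) (X : Fin n → Ω → S) (H : Ω → U)
    (f : (Fin n → S) → U) (hf : ∀ ω, H ω = f (fun i => X i ω)) :
    mi μ (fun ω => fun i => X i ω) W - mi μ H W = cmi μ (fun ω => fun i => X i ω) W H := by
  rw [mi_eq, mi_eq, cmi_eq hμ.1, ← Finset.sum_sub_distrib]
  refine Finset.sum_congr rfl fun ω _ => ?_
  rw [← mul_sub]
  by_cases h0 : μ ω = 0
  · rw [h0, zero_mul, zero_mul]
  have hpos : 0 < μ ω := lt_of_le_of_ne (hμ.1 ω) (Ne.symm h0)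
  congr 1
  -- name all the probabilities
  have hXH : ∀ ω', (fun i => X i ω') = (fun i => X i ω) → H ω' = H ω := by
    intro ω' h; rw [hf ω', hf ω, h]
  have ea : pr μ (fun ω' => ((fun i => X i ω') = (fun i => X i ω) ∧ W ω' = W ω) ∧ H ω' = H ω)
      = pr μ (fun ω' => (fun i => X i ω') = (fun i => X i ω) ∧ W ω' = W ω) :=
    pr_congr fun ω' => ⟨fun h => h.1, fun h => ⟨h, hXH ω' h.1⟩⟩
  have eb : pr μ (fun ω' => (fun i => X i ω') = (fun i => X i ω) ∧ H ω' = H ω)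
      = pr μ (fun ω' => (fun i => X i ω') = (fun i => X i ω)) :=
    pr_congr fun ω' => ⟨fun h => h.1, fun h => ⟨h, hXH ω' h⟩⟩
  have ed : pr μ (fun ω' => W ω' = W ω ∧ H ω' = H ω)
      = pr μ (fun ω' => H ω' = H ω ∧ W ω' = W ω) := pr_congr fun ω' => and_comm
  have ha : 0 < pr μ (fun ω' => (fun i => X i ω') = (fun i => X i ω) ∧ W ω' = W ω) :=
    pr_pos hμ.1 hpos ⟨rfl, rfl⟩
  have hb : 0 < pr μ (fun ω' => (fun i => X i ω') = (fun i => X i ω)) :=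
    pr_pos hμ.1 hpos rfl
  have hc : 0 < pr μ (fun ω' => W ω' = W ω) := pr_pos hμ.1 hpos rfl
  have hd : 0 < pr μ (fun ω' => H ω' = H ω ∧ W ω' = W ω) := pr_pos hμ.1 hpos ⟨rfl, rfl⟩
  have he : 0 < pr μ (fun ω' => H ω' = H ω) := pr_pos hμ.1 hpos rfl
  show _ = Real.log (cpr μ _ _ / (cpr μ _ _ * cpr μ _ _))
  unfold cpr
  rw [ea, eb, ed]
  exact log_alg ha hb hc hd he

lemma logstep {n : ℕ} {a b d e : ℝ} {A B : Fin n → ℝ}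
    (ha : 0 < a) (hb : 0 < b) (hd : 0 < d) (he : 0 < e)
    (hA : ∀ i, 0 < A i) (hB : ∀ i, 0 < B i)
    (hind : a / d = ∏ i, A i / d) :
    (∑ i, Real.log ((A i / e) / ((B i / e) * (d / e))))
      - Real.log ((a / e) / ((b / e) * (d / e)))
    = Real.log ((b / e) / ∏ i, B i / e) := by
  have key : ∀ p q : ℝ, 0 < p → 0 < q →
      Real.log ((p / e) / ((q / e) * (d / e)))
        = Real.log p - Real.log q - Real.log d + Real.log e := by
    intro p q hp hq
    have h1 : (p / e) / ((q / e) * (d / e)) = (p * e) / (q * d) := by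
      field_simp
    rw [h1, Real.log_div (by positivity) (by positivity), Real.log_mul hp.ne' he.ne',
      Real.log_mul hq.ne' hd.ne']
    ring
  have hlog : Real.log a - Real.log d
      = (∑ i, Real.log (A i)) - (n : ℝ) * Real.log d := by
    have h2 : Real.log (a / d) = ∑ i, Real.log (A i / d) := by
      rw [hind, Real.log_prod]
      intro i _
      exact (div_pos (hA i) hd).ne'
    rw [Real.log_div ha.ne' hd.ne'] at h2
    rw [h2, Finset.sum_congr rfl fun i _ => Real.log_div (hA i).ne' hd.ne',
      Finset.sum_sub_distrib, Finset.sum_const, card_univ, Fintype.card_fin, nsmul_eq_mul]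
  have hRHS : Real.log ((b / e) / ∏ i, B i / e)
      = Real.log b - Real.log e - ((∑ i, Real.log (B i)) - (n : ℝ) * Real.log e) := by
    rw [Real.log_div (by positivity) (Finset.prod_pos fun i _ => div_pos (hB i) he).ne',
      Real.log_div hb.ne' he.ne', Real.log_prod (fun i _ => (div_pos (hB i) he).ne'),
      Finset.sum_congr rfl fun i _ => Real.log_div (hB i).ne' he.ne',
      Finset.sum_sub_distrib, Finset.sum_const, card_univ, Fintype.card_fin, nsmul_eq_mul]
  have hLHS : (∑ i, Real.log ((A i / e) / ((B i / e) * (d / e))))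
      = (∑ i, Real.log (A i)) - (∑ i, Real.log (B i))
        - (n : ℝ) * Real.log d + (n : ℝ) * Real.log e := by
    rw [Finset.sum_congr rfl fun i _ => key (A i) (B i) (hA i) (hB i)]
    simp only [Finset.sum_add_distrib, Finset.sum_sub_distrib, Finset.sum_const, card_univ,
      Fintype.card_fin, nsmul_eq_mul]
  rw [hLHS, hRHS, key a b ha hb]
  linarith


set_option maxHeartbeats 1000000 in
lemma value_bound (hμ : IsPmf μ) (X : Fin n → Ω → S) (H : Ω → U)
    (f : (Fin n → S) → U) (hf : ∀ ω, H ω = f (fun i => X i ω)) :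
    ∑ x ∈ univ.image (fun ω => fun i => X i ω),
      pr μ (fun ω' => (fun i => X i ω') = x) *
        ((∏ i, cpr μ (fun ω' => X i ω' = x i) (fun ω' => H ω' = f x)) /
          cpr μ (fun ω' => (fun i => X i ω') = x) (fun ω' => H ω' = f x)) ≤ 1 := by
  have hμ0 := hμ.1
  have hterm : ∀ x ∈ univ.image (fun ω => fun i => X i ω),
      pr μ (fun ω' => (fun i => X i ω') = x) *
        ((∏ i, cpr μ (fun ω' => X i ω' = x i) (fun ω' => H ω' = f x)) /
          cpr μ (fun ω' => (fun i => X i ω') = x) (fun ω' => H ω' = f x))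
      ≤ pr μ (fun ω' => H ω' = f x) *
          ∏ i, cpr μ (fun ω' => X i ω' = x i) (fun ω' => H ω' = f x) := by
    intro x _
    by_cases hp0 : pr μ (fun ω' => (fun i => X i ω') = x) = 0
    · rw [hp0, zero_mul]
      exact mul_nonneg (pr_nonneg hμ0 _)
        (Finset.prod_nonneg fun i _ => cpr_nonneg hμ0 _ _)
    · have hp : 0 < pr μ (fun ω' => (fun i => X i ω') = x) :=
        lt_of_le_of_ne (pr_nonneg hμ0 _) (Ne.symm hp0)
      have hbx : pr μ (fun ω' => (fun i => X i ω') = x ∧ H ω' = f x)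
          = pr μ (fun ω' => (fun i => X i ω') = x) :=
        pr_congr fun ω' => ⟨And.left, fun h => ⟨h, by rw [hf ω', h]⟩⟩
      have he : 0 < pr μ (fun ω' => H ω' = f x) :=
        lt_of_lt_of_le hp (hbx ▸ pr_mono hμ0 (fun ω' h => h.2))
      have hq : cpr μ (fun ω' => (fun i => X i ω') = x) (fun ω' => H ω' = f x)
          = pr μ (fun ω' => (fun i => X i ω') = x) / pr μ (fun ω' => H ω' = f x) := by
        unfold cpr
        rw [hbx]
      rw [hq]
      apply le_of_eq
      field_simp
  refine le_trans (Finset.sum_le_sum hterm) ?_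
  have hmaps : ∀ x ∈ univ.image (fun ω => fun i => X i ω), f x ∈ univ.image H := by
    intro x hx
    obtain ⟨ω, -, rfl⟩ := Finset.mem_image.1 hx
    exact Finset.mem_image.2 ⟨ω, Finset.mem_univ ω, (hf ω)⟩
  rw [← Finset.sum_fiberwise_of_maps_to hmaps]
  have hinner : ∀ h ∈ univ.image H,
      (∑ x ∈ (univ.image (fun ω => fun i => X i ω)).filter (fun x => f x = h),
        pr μ (fun ω' => H ω' = f x) * ∏ i, cpr μ (fun ω' => X i ω' = x i) (fun ω' => H ω' = f x))
      ≤ pr μ (fun ω' => H ω' = h) := by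
    intro h _
    have hcg : ∀ x ∈ (univ.image (fun ω => fun i => X i ω)).filter (fun x => f x = h),
        pr μ (fun ω' => H ω' = f x) * ∏ i, cpr μ (fun ω' => X i ω' = x i) (fun ω' => H ω' = f x)
        = pr μ (fun ω' => H ω' = h) * ∏ i, cpr μ (fun ω' => X i ω' = x i) (fun ω' => H ω' = h) := by
      intro x hx
      rw [(Finset.mem_filter.1 hx).2]
    rw [Finset.sum_congr rfl hcg, ← Finset.mul_sum]
    have hone : ∀ i : Fin n,
        ∑ v ∈ univ.image (X i), cpr μ (fun ω' => X i ω' = v) (fun ω' => H ω' = h) ≤ 1 := by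
      intro i
      unfold cpr
      rw [← Finset.sum_div]
      have hnum : ∑ v ∈ univ.image (X i), pr μ (fun ω' => X i ω' = v ∧ H ω' = h)
          = pr μ (fun ω' => H ω' = h) := by
        rw [Finset.sum_congr rfl (fun v _ => (pr_restrict (μ := μ) _ _).symm), sum_pr_eq,
          sum_restr]
      rw [hnum]
      rcases eq_or_ne (pr μ (fun ω' => H ω' = h)) 0 with h0 | h0
      · rw [h0, div_zero]; norm_num
      · rw [div_self h0]
    have hsub : (univ.image (fun ω => fun i => X i ω)).filter (fun x => f x = h)
        ⊆ Fintype.piFinset fun i => univ.image (X i) := by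
      intro x hx
      obtain ⟨ω, -, rfl⟩ := Finset.mem_image.1 (Finset.mem_filter.1 hx).1
      exact Fintype.mem_piFinset.2 fun i => mem_image_of_mem (X i) (mem_univ ω)
    have hfac : (∑ x ∈ (univ.image (fun ω => fun i => X i ω)).filter (fun x => f x = h),
        ∏ i, cpr μ (fun ω' => X i ω' = x i) (fun ω' => H ω' = h)) ≤ 1 := by
      calc (∑ x ∈ (univ.image (fun ω => fun i => X i ω)).filter (fun x => f x = h),
            ∏ i, cpr μ (fun ω' => X i ω' = x i) (fun ω' => H ω' = h))
          ≤ ∑ x ∈ Fintype.piFinset (fun i => univ.image (X i)),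
            ∏ i, cpr μ (fun ω' => X i ω' = x i) (fun ω' => H ω' = h) :=
            Finset.sum_le_sum_of_subset_of_nonneg hsub
              (fun x _ _ => Finset.prod_nonneg fun i _ => cpr_nonneg hμ0 _ _)
        _ = ∏ i, ∑ v ∈ univ.image (X i), cpr μ (fun ω' => X i ω' = v) (fun ω' => H ω' = h) :=
            (Finset.prod_univ_sum (fun i => Finset.univ.image (X i))
              (fun i v => cpr μ (fun ω' => X i ω' = v) (fun ω' => H ω' = h))).symm
        _ ≤ 1 := Finset.prod_le_one
            (fun i _ => Finset.sum_nonneg fun v _ => cpr_nonneg hμ0 _ _)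
            (fun i _ => hone i)
    refine le_trans (mul_le_mul_of_nonneg_left hfac (pr_nonneg hμ0 _)) ?_
    rw [mul_one]
  refine le_trans (Finset.sum_le_sum hinner) ?_
  rw [sum_pr_eq, hμ.2]


set_option maxHeartbeats 1000000 in
lemma gibbs_lemma (hμ : IsPmf μ) (X : Fin n → Ω → S) (H : Ω → U)
    (f : (Fin n → S) → U) (hf : ∀ ω, H ω = f (fun i => X i ω)) :
    0 ≤ ∑ ω, μ ω * Real.log
      (cpr μ (fun ω' => (fun i => X i ω') = (fun i => X i ω)) (fun ω' => H ω' = H ω) /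
       ∏ i, cpr μ (fun ω' => X i ω' = X i ω) (fun ω' => H ω' = H ω)) := by
  have hμ0 := hμ.1
  have hpt : ∀ ω : Ω, μ ω * (1 -
      (∏ i, cpr μ (fun ω' => X i ω' = X i ω) (fun ω' => H ω' = H ω)) /
        cpr μ (fun ω' => (fun i => X i ω') = (fun i => X i ω)) (fun ω' => H ω' = H ω))
      ≤ μ ω * Real.log
        (cpr μ (fun ω' => (fun i => X i ω') = (fun i => X i ω)) (fun ω' => H ω' = H ω) /
          ∏ i, cpr μ (fun ω' => X i ω' = X i ω) (fun ω' => H ω' = H ω)) := by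
    intro ω
    by_cases h0 : μ ω = 0
    · rw [h0, zero_mul, zero_mul]
    have hpos : 0 < μ ω := lt_of_le_of_ne (hμ0 ω) (Ne.symm h0)
    apply mul_le_mul_of_nonneg_left _ (hμ0 ω)
    have hq : 0 < cpr μ (fun ω' => (fun i => X i ω') = (fun i => X i ω))
        (fun ω' => H ω' = H ω) :=
      div_pos (pr_pos hμ0 hpos ⟨rfl, rfl⟩) (pr_pos hμ0 hpos rfl)
    have hr : 0 < ∏ i, cpr μ (fun ω' => X i ω' = X i ω) (fun ω' => H ω' = H ω) :=
      Finset.prod_pos fun i _ =>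
        div_pos (pr_pos hμ0 hpos ⟨rfl, rfl⟩) (pr_pos hμ0 hpos rfl)
    have h1 := Real.log_le_sub_one_of_pos (div_pos hr hq)
    have h2 : Real.log (cpr μ (fun ω' => (fun i => X i ω') = (fun i => X i ω))
        (fun ω' => H ω' = H ω) /
          ∏ i, cpr μ (fun ω' => X i ω' = X i ω) (fun ω' => H ω' = H ω))
        = - Real.log ((∏ i, cpr μ (fun ω' => X i ω' = X i ω) (fun ω' => H ω' = H ω)) /
            cpr μ (fun ω' => (fun i => X i ω') = (fun i => X i ω)) (fun ω' => H ω' = H ω)) := by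
      rw [Real.log_div hq.ne' hr.ne', Real.log_div hr.ne' hq.ne']
      ring
    rw [h2]
    linarith
  have hSle : (∑ ω, μ ω *
      ((∏ i, cpr μ (fun ω' => X i ω' = X i ω) (fun ω' => H ω' = H ω)) /
        cpr μ (fun ω' => (fun i => X i ω') = (fun i => X i ω)) (fun ω' => H ω' = H ω))) ≤ 1 := by
    have hrw : ∀ ω : Ω,
        (∏ i, cpr μ (fun ω' => X i ω' = X i ω) (fun ω' => H ω' = H ω)) /
          cpr μ (fun ω' => (fun i => X i ω') = (fun i => X i ω)) (fun ω' => H ω' = H ω)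
        = (fun x : Fin n → S =>
            (∏ i, cpr μ (fun ω' => X i ω' = x i) (fun ω' => H ω' = f x)) /
              cpr μ (fun ω' => (fun i => X i ω') = x) (fun ω' => H ω' = f x))
            ((fun ω => fun i => X i ω) ω) := by
      intro ω
      simp only [hf ω]
    have hos := omega_single μ (fun ω => fun i => X i ω) (fun x =>
      (∏ i, cpr μ (fun ω' => X i ω' = x i) (fun ω' => H ω' = f x)) /
        cpr μ (fun ω' => (fun i => X i ω') = x) (fun ω' => H ω' = f x))
    refine le_trans (le_of_eq ?_) (value_bound hμ X H f hf)
    refine Eq.trans (Finset.sum_congr rfl fun ω _ => by rw [hrw ω]) (Eq.trans hos.symm ?_)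
    congr!
  have h3 := Finset.sum_le_sum fun ω (_ : ω ∈ univ) => hpt ω
  have h4 : (∑ ω, μ ω * (1 -
      (∏ i, cpr μ (fun ω' => X i ω' = X i ω) (fun ω' => H ω' = H ω)) /
        cpr μ (fun ω' => (fun i => X i ω') = (fun i => X i ω)) (fun ω' => H ω' = H ω)))
      = 1 - ∑ ω, μ ω *
      ((∏ i, cpr μ (fun ω' => X i ω' = X i ω) (fun ω' => H ω' = H ω)) /
        cpr μ (fun ω' => (fun i => X i ω') = (fun i => X i ω)) (fun ω' => H ω' = H ω)) := by
    simp only [mul_one_sub]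
    rw [Finset.sum_sub_distrib, hμ.2]
  linarith


set_option maxHeartbeats 1000000 in
lemma step3_lemma (hμ : IsPmf μ) (W : Ω → T) (X : Fin n → Ω → S) (H : Ω → U)
    (f : (Fin n → S) → U) (hf : ∀ ω, H ω = f (fun i => X i ω))
    (hind : iCondIndep μ X (fun ω => (W ω, H ω))) :
    cmi μ (fun ω => fun i => X i ω) W H ≤ ∑ i, cmi μ (X i) W H := by
  have hμ0 := hμ.1
  have e1 : cmi μ (fun ω => fun i => X i ω) W H = ∑ ω, μ ω *
      Real.log (cpr μ (fun ω' => (fun i => X i ω') = (fun i => X i ω) ∧ W ω' = W ω)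
          (fun ω' => H ω' = H ω) /
        (cpr μ (fun ω' => (fun i => X i ω') = (fun i => X i ω)) (fun ω' => H ω' = H ω) *
         cpr μ (fun ω' => W ω' = W ω) (fun ω' => H ω' = H ω))) :=
    cmi_eq hμ0 (fun ω => fun i => X i ω) W H
  have e2 : ∀ i : Fin n, cmi μ (X i) W H = ∑ ω, μ ω *
      Real.log (cpr μ (fun ω' => X i ω' = X i ω ∧ W ω' = W ω) (fun ω' => H ω' = H ω) /
        (cpr μ (fun ω' => X i ω' = X i ω) (fun ω' => H ω' = H ω) *
         cpr μ (fun ω' => W ω' = W ω) (fun ω' => H ω' = H ω))) :=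
    fun i => cmi_eq hμ0 (X i) W H
  have e3 : ∑ i, cmi μ (X i) W H = ∑ ω, μ ω * ∑ i : Fin n,
      Real.log (cpr μ (fun ω' => X i ω' = X i ω ∧ W ω' = W ω) (fun ω' => H ω' = H ω) /
        (cpr μ (fun ω' => X i ω' = X i ω) (fun ω' => H ω' = H ω) *
         cpr μ (fun ω' => W ω' = W ω) (fun ω' => H ω' = H ω))) :=
    (Finset.sum_congr rfl fun i _ => e2 i).trans
      (Finset.sum_comm.trans (Finset.sum_congr rfl fun ω _ => (Finset.mul_sum _ _ _).symm))
  have hg := gibbs_lemma hμ X H f hf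
  have main : (∑ ω, μ ω * ∑ i : Fin n,
      Real.log (cpr μ (fun ω' => X i ω' = X i ω ∧ W ω' = W ω) (fun ω' => H ω' = H ω) /
        (cpr μ (fun ω' => X i ω' = X i ω) (fun ω' => H ω' = H ω) *
         cpr μ (fun ω' => W ω' = W ω) (fun ω' => H ω' = H ω))))
      - (∑ ω, μ ω *
      Real.log (cpr μ (fun ω' => (fun i => X i ω') = (fun i => X i ω) ∧ W ω' = W ω)
          (fun ω' => H ω' = H ω) /
        (cpr μ (fun ω' => (fun i => X i ω') = (fun i => X i ω)) (fun ω' => H ω' = H ω) *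
         cpr μ (fun ω' => W ω' = W ω) (fun ω' => H ω' = H ω))))
      = ∑ ω, μ ω * Real.log
      (cpr μ (fun ω' => (fun i => X i ω') = (fun i => X i ω)) (fun ω' => H ω' = H ω) /
       ∏ i, cpr μ (fun ω' => X i ω' = X i ω) (fun ω' => H ω' = H ω)) := by
    rw [← Finset.sum_sub_distrib]
    refine Finset.sum_congr rfl fun ω _ => ?_
    by_cases h0 : μ ω = 0
    · simp [h0]
    have hpos : 0 < μ ω := lt_of_le_of_ne (hμ0 ω) (Ne.symm h0)
    rw [← mul_sub]
    congr 1
    -- positivity facts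
    have ha : 0 < pr μ (fun ω' =>
        ((fun i => X i ω') = (fun i => X i ω) ∧ W ω' = W ω) ∧ H ω' = H ω) :=
      pr_pos hμ0 hpos ⟨⟨rfl, rfl⟩, rfl⟩
    have hb : 0 < pr μ (fun ω' => (fun i => X i ω') = (fun i => X i ω) ∧ H ω' = H ω) :=
      pr_pos hμ0 hpos ⟨rfl, rfl⟩
    have hd : 0 < pr μ (fun ω' => W ω' = W ω ∧ H ω' = H ω) :=
      pr_pos hμ0 hpos ⟨rfl, rfl⟩
    have he : 0 < pr μ (fun ω' => H ω' = H ω) := pr_pos hμ0 hpos rfl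
    have hA : ∀ i : Fin n,
        0 < pr μ (fun ω' => (X i ω' = X i ω ∧ W ω' = W ω) ∧ H ω' = H ω) :=
      fun i => pr_pos hμ0 hpos ⟨⟨rfl, rfl⟩, rfl⟩
    have hB : ∀ i : Fin n, 0 < pr μ (fun ω' => X i ω' = X i ω ∧ H ω' = H ω) :=
      fun i => pr_pos hμ0 hpos ⟨rfl, rfl⟩
    -- independence
    have hindeq : pr μ (fun ω' =>
          ((fun i => X i ω') = (fun i => X i ω) ∧ W ω' = W ω) ∧ H ω' = H ω)
            / pr μ (fun ω' => W ω' = W ω ∧ H ω' = H ω)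
        = ∏ i, pr μ (fun ω' => (X i ω' = X i ω ∧ W ω' = W ω) ∧ H ω' = H ω)
            / pr μ (fun ω' => W ω' = W ω ∧ H ω' = H ω) := by
      have hne : pr μ (fun ω' => (W ω', H ω') = (W ω, H ω)) ≠ 0 :=
        (pr_pos (A := fun ω' => (W ω', H ω') = (W ω, H ω)) hμ0 hpos rfl).ne'
      have hB2 := hind (W ω, H ω) hne (fun i => X i ω)
      have hden : pr μ (fun ω' => (W ω', H ω') = (W ω, H ω))
          = pr μ (fun ω' => W ω' = W ω ∧ H ω' = H ω) :=
        pr_congr fun ω' => by simp only [Prod.mk.injEq]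
      calc pr μ (fun ω' =>
            ((fun i => X i ω') = (fun i => X i ω) ∧ W ω' = W ω) ∧ H ω' = H ω)
              / pr μ (fun ω' => W ω' = W ω ∧ H ω' = H ω)
          = cpr μ (fun ω' => ∀ i, X i ω' = X i ω)
              (fun ω' => (W ω', H ω') = (W ω, H ω)) := by
            unfold cpr
            rw [hden]
            congr 1
            refine pr_congr fun ω' => ?_
            constructor
            · rintro ⟨⟨hx, hw⟩, hh⟩
              exact ⟨fun i => congrFun hx i,
                show (W ω', H ω') = (W ω, H ω) by rw [hw, hh]⟩
            · rintro ⟨hx, hp⟩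
              rw [Prod.mk.injEq] at hp
              exact ⟨⟨funext hx, hp.1⟩, hp.2⟩
        _ = ∏ i, cpr μ (fun ω' => X i ω' = X i ω)
              (fun ω' => (W ω', H ω') = (W ω, H ω)) := hB2
        _ = ∏ i, pr μ (fun ω' => (X i ω' = X i ω ∧ W ω' = W ω) ∧ H ω' = H ω)
              / pr μ (fun ω' => W ω' = W ω ∧ H ω' = H ω) := by
            refine Finset.prod_congr rfl fun i _ => ?_
            unfold cpr
            rw [hden]
            congr 1
            refine pr_congr fun ω' => ?_
            simp only [Prod.mk.injEq]
            tauto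
    exact logstep ha hb hd he hA hB hindeq
  linarith

end Main

/-- Convergence implies aggregation (no false consensus): if `H` is a deterministic
function of the signals `X 1, …, X n`, the signals are mutually independent
conditioned on `(W, H)` (which holds for substitutes in any Round Robin Protocol),
and ε-MI consensus holds, i.e. `I(X i; W | H) ≤ ε` for every `i`, then the amount of
information not yet aggregated satisfies `I((X 1,…,X n); W) - I(H; W) ≤ n·ε`. -/
theorem no_false_consensus_of_substitutes
    {n : ℕ} {S T U : Type*} (μ : Ω → ℝ) (hμ : IsPmf μ)
    (W : Ω → T) (X : Fin n → Ω → S) (H : Ω → U)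
    (hH : ∃ f : (Fin n → S) → U, ∀ ω, H ω = f (fun i => X i ω))
    (hind : iCondIndep μ X (fun ω => (W ω, H ω)))
    (ε : ℝ) (hcons : ∀ i, cmi μ (X i) W H ≤ ε) :
    mi μ (fun ω => fun i => X i ω) W - mi μ H W ≤ n * ε := by
  obtain ⟨f, hf⟩ := hH
  have h2 := step2_lemma hμ W X H f hf
  have h3 := step3_lemma hμ W X H f hf hind
  have h4 : ∑ i : Fin n, cmi μ (X i) W H ≤ n * ε := by
    calc ∑ i : Fin n, cmi μ (X i) W H ≤ ∑ _i : Fin n, ε :=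
          Finset.sum_le_sum fun i _ => hcons i
      _ = n * ε := by
          rw [Finset.sum_const, Finset.card_univ, Fintype.card_fin, nsmul_eq_mul]
  linarith
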